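/- Let α be a finite partially ordered set, and model the one-point extension of α by a new element as Option α (the new maximal element being none). The map sending an antichain A of α to the partial order on Option α defined by: some u ≤ some v iff u ≤ v in α, some u < none iff u ≤ c for some c ∈ A, and none ≤ none, is a bijection from the set of antichains of α onto the set of partial orders on Option α whose restriction along some equals the order of α and in which none is a maximal element. (Hence the number of labeled offspring of a labeled causet x equals the number of distinct antichains in x.) -/

import Mathlib

/-- The one-point extension of the order of `α` determined by an antichain `A`:
the new element `none` is maximal, `some u ≤ some v` iff `u ≤ v` in `α`, and
`some u ≤ none` iff `u ≤ c` for some `c ∈ A`. -/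
def extOrder {α : Type*} [PartialOrder α] (A : Set α) :
    Option α → Option α → Prop
  | some u, some v => u ≤ v
  | some u, none => ∃ c ∈ A, u ≤ c
  | none, some _ => False
  | none, none => True

/-- The map sending an antichain `A` of a finite poset `α` to the partial order
`extOrder A` on `Option α` is a bijection from the set of antichains of `α` onto
the set of partial orders on `Option α` whose restriction along `some` is the
order of `α` and in which `none` is maximal. -/
theorem antichain_extension_bijOn {α : Type*} [Fintype α] [PartialOrder α] :
    Set.BijOn (extOrder (α := α))
      {A : Set α | IsAntichain (· ≤ ·) A}
      {r : Option α → Option α → Prop |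
        IsPartialOrder (Option α) r ∧
        (∀ u v : α, r (some u) (some v) ↔ u ≤ v) ∧
        (∀ z : Option α, r none z → z = none)} := by
  constructor
  · -- MapsTo
    intro A _
    refine ⟨{ refl := ?_, trans := ?_, antisymm := ?_ }, fun u v => Iff.rfl, ?_⟩
    · rintro (_ | u) <;> simp [extOrder]
    · rintro (_ | u) (_ | v) (_ | w) h1 h2 <;>
        simp_all [extOrder]
      · obtain ⟨c, hc, hvc⟩ := h2
        exact ⟨c, hc, h1.trans hvc⟩
      · exact h1.trans h2
    · rintro (_ | u) (_ | v) h1 h2 <;> simp_all [extOrder]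
      exact le_antisymm h1 h2
    · rintro (_ | z) h
      · rfl
      · exact absurd h (by simp [extOrder])
  constructor
  · -- InjOn
    intro A hA B hB hAB
    have key : ∀ (A B : Set α), IsAntichain (· ≤ ·) A → IsAntichain (· ≤ ·) B →
        extOrder A = extOrder B → A ⊆ B := by
      intro A B hA hB h a ha
      have h1 : extOrder A (some a) none := ⟨a, ha, le_rfl⟩
      rw [h] at h1
      obtain ⟨b, hb, hab⟩ := h1
      have h2 : extOrder B (some b) none := ⟨b, hb, le_rfl⟩
      rw [← h] at h2
      obtain ⟨c, hc, hbc⟩ := h2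
      have : a = c := hA.eq ha hc (hab.trans hbc)
      subst this
      have : a = b := le_antisymm hab hbc
      subst this
      exact hb
    exact Set.Subset.antisymm (key A B hA hB hAB) (key B A hB hA hAB.symm)
  · -- SurjOn
    rintro r ⟨hpo, hsome, hmax⟩
    set S : Set α := {c | r (some c) none} with hS
    set A : Set α := {c ∈ S | ∀ d ∈ S, c ≤ d → c = d} with hAdef
    have htrans := hpo.toIsTrans.trans
    have hrefl := hpo.toRefl.refl
    have hanti := hpo.toAntisymm.antisymm
    refine ⟨A, ?_, ?_⟩
    · intro a ha b hb hne hab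
      exact hne (ha.2 b hb.1 hab)
    · funext x y
      match x, y with
      | some u, some v => exact propext (hsome u v).symm
      | none, some v =>
        exact propext ⟨False.elim, fun h => by simpa using hmax _ h⟩
      | none, none => exact propext ⟨fun _ => hrefl none, fun _ => trivial⟩
      | some u, none =>
        apply propext
        constructor
        · rintro ⟨c, hc, huc⟩
          exact htrans _ (some c) _ ((hsome u c).mpr huc) hc.1
        · intro h
          have hu : u ∈ S := h
          obtain ⟨m, hm, hmmax⟩ : ∃ m ∈ {c ∈ S | u ≤ c}, ∀ d ∈ {c ∈ S | u ≤ c}, m ≤ d → m = d := by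
            obtain ⟨m, hm⟩ := (Set.toFinite {c ∈ S | u ≤ c}).exists_maximal ⟨u, hu, le_rfl⟩
            exact ⟨m, hm.1, fun d hd hmd => le_antisymm hmd (hm.2 hd hmd)⟩
          refine ⟨m, ⟨hm.1, fun d hd hmd => ?_⟩, hm.2⟩
          exact hmmax d ⟨hd, hm.2.trans hmd⟩ hmd
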